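/- Let d ≥ 1, g > 0, and fix a point z ∈ ℝ^d. Let v ∈ ℝ^d have i.i.d. coordinates uniform on [0,g], and let G be the grid of axis-aligned cells of side length g anchored at v, i.e. G = { ∏_{l=1}^d [v_l + g t_l, v_l + g(t_l+1)) : t ∈ ℤ^d }. Then the expected number of cells C ∈ G with dist(C, z) ≤ g/d is at most (1 + 2/d)^d ≤ e². -/

import Mathlib

open scoped ENNReal

noncomputable section

/-- Points of `ℝ^d` with the Euclidean metric. -/
abbrev Pt (d : ℕ) := EuclideanSpace ℝ (Fin d)

/-- The axis-aligned grid cell of side length `g`, anchored at `v`, with index `t ∈ ℤ^d`: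
`∏_l [v_l + g·t_l, v_l + g·(t_l+1))`. -/
def cellOf (d : ℕ) (v : Fin d → ℝ) (g : ℝ) (t : Fin d → ℤ) : Set (Pt d) :=
  {x | ∀ l : Fin d, v l + g * t l ≤ x l ∧ x l < v l + g * (t l + 1)}

/-- The distance between two sets, `dist(A,B) = inf{dist(a,b) : a ∈ A, b ∈ B}`. -/
def setDist {d : ℕ} (A B : Set (Pt d)) : ℝ :=
  sInf (Set.image2 dist A B)

end

open MeasureTheory Set

-- tsum fubini over pi types
lemma aux_tsum_pi_prod : ∀ (d : ℕ) (a : Fin d → ℤ → ℝ≥0∞),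
    ∑' t : Fin d → ℤ, ∏ l, a l (t l) = ∏ l, ∑' n, a l n := by
  intro d
  induction d with
  | zero =>
    intro a
    simp only [Finset.univ_eq_empty, Finset.prod_empty]
    exact tsum_eq_single (fun (i : Fin 0) => (0:ℤ))
      (fun b hb => absurd (funext fun i => i.elim0) hb)
  | succ d ih =>
    intro a
    rw [← (Fin.consEquiv (fun _ : Fin (d+1) => ℤ)).tsum_eq]
    simp only [Fin.consEquiv_apply]
    rw [ENNReal.tsum_prod']
    simp only [Fin.prod_univ_succ, Fin.cons_zero, Fin.cons_succ]
    calc ∑' (n : ℤ) (t : Fin d → ℤ), a 0 n * ∏ l : Fin d, a l.succ (t l)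
        = ∑' (n : ℤ), a 0 n * ∑' (t : Fin d → ℤ), ∏ l : Fin d, a l.succ (t l) := by
          congr 1; ext n; rw [ENNReal.tsum_mul_left]
      _ = (∑' n, a 0 n) * ∑' (t : Fin d → ℤ), ∏ l : Fin d, a l.succ (t l) := by
          rw [ENNReal.tsum_mul_right]
      _ = (∑' n, a 0 n) * ∏ l : Fin d, ∑' n, a l.succ n := by rw [ih]

-- one-dimensional tiling bound
lemma aux_oneDim (g : ℝ) (hg : 0 < g) (c L : ℝ) (hL : 0 ≤ L) :
    ∑' n : ℤ, volume (Icc (c - L - g*(n+1)) (c + L - g*n) ∩ Icc (0:ℝ) g)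
      ≤ ENNReal.ofReal (g + 2*L) := by
  have key : ∀ n : ℤ, Icc (c - L - g*(n+1)) (c + L - g*n) ∩ Icc (0:ℝ) g
      = (fun x => x + g*n) ⁻¹' (Icc (c - L - g) (c + L) ∩ Icc (g*n) (g*n + g)) := by
    intro n
    ext x
    simp only [mem_inter_iff, mem_Icc, mem_preimage]
    constructor <;> (intro h; constructor <;> constructor <;> nlinarith [h.1.1, h.1.2, h.2.1, h.2.2])
  calc ∑' n : ℤ, volume (Icc (c - L - g*(n+1)) (c + L - g*n) ∩ Icc (0:ℝ) g)
      = ∑' n : ℤ, volume (Icc (c - L - g) (c + L) ∩ Icc (g*n) (g*n + g)) := by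
        congr 1; ext n
        rw [key n, measure_preimage_add_right]
    _ ≤ ∑' n : ℤ, volume (Icc (c - L - g) (c + L) ∩ Ico (g*n) (g*n + g)) := by
        apply ENNReal.tsum_le_tsum
        intro n
        have : Icc (c - L - g) (c + L) ∩ Icc (g*n) (g*n + g)
            ⊆ (Icc (c - L - g) (c + L) ∩ Ico (g*n) (g*n + g)) ∪ {g*n + g} := by
          intro x hx
          rcases eq_or_lt_of_le hx.2.2 with h | h
          · exact Or.inr (by simp [h])
          · exact Or.inl ⟨hx.1, hx.2.1, h⟩
        calc volume _ ≤ volume ((Icc (c - L - g) (c + L) ∩ Ico (g*n) (g*n + g)) ∪ {g*n + g}) :=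
              measure_mono this
          _ ≤ _ + volume ({g*n + g} : Set ℝ) := measure_union_le _ _
          _ = _ := by simp
    _ = volume (⋃ n : ℤ, Icc (c - L - g) (c + L) ∩ Ico (g*n) (g*n + g)) := by
        rw [measure_iUnion]
        · intro n m hnm
          apply Disjoint.inter_left'
          apply Disjoint.inter_right'
          rw [Set.disjoint_left]
          intro x hx1 hx2
          rcases lt_or_gt_of_ne hnm with h | h
          · have hc : (n:ℝ) + 1 ≤ m := by exact_mod_cast h
            nlinarith [hx1.1, hx1.2, hx2.1, hx2.2]
          · have hc : (m:ℝ) + 1 ≤ n := by exact_mod_cast h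
            nlinarith [hx1.1, hx1.2, hx2.1, hx2.2]
        · exact fun n => (measurableSet_Icc.inter measurableSet_Ico)
    _ ≤ volume (Icc (c - L - g) (c + L)) := measure_mono (iUnion_subset fun n => inter_subset_left)
    _ = ENNReal.ofReal (g + 2*L) := by rw [Real.volume_Icc]; ring_nf


lemma aux_coord {d : ℕ} (x z : Pt d) (l : Fin d) : |x l - z l| ≤ dist x z := by
  rw [EuclideanSpace.dist_eq, ← Real.sqrt_sq_eq_abs]
  apply Real.sqrt_le_sqrt
  have := Finset.single_le_sum (f := fun i => dist (x i) (z i) ^ 2)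
    (fun i _ => sq_nonneg _) (Finset.mem_univ l)
  simpa [Real.dist_eq] using this

lemma aux_mem {d : ℕ} (v : Fin d → ℝ) (g : ℝ) (hg : 0 < g) (t : Fin d → ℤ) (z : Pt d)
    (h : setDist (cellOf d v g t) {z} ≤ g / d) (l : Fin d) :
    v l ∈ Icc (z l - g/d - g*(t l + 1)) (z l + g/d - g * t l) := by
  have hx₀ : (WithLp.toLp 2 (fun l => v l + g * t l) : Pt d) ∈ cellOf d v g t := by
    intro l
    refine ⟨le_refl _, ?_⟩
    have : g * ((t l : ℝ)) < g * (t l + 1) := by nlinarith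
    simpa using this
  have hne : (Set.image2 dist (cellOf d v g t) ({z} : Set (Pt d))).Nonempty :=
    ⟨_, Set.mem_image2_of_mem hx₀ rfl⟩
  have key : ∀ y ∈ Set.image2 dist (cellOf d v g t) ({z} : Set (Pt d)),
      v l + g * t l - z l ≤ y ∧ z l - (v l + g * (t l + 1)) ≤ y := by
    rintro y ⟨x, hx, w, hw, rfl⟩
    rw [Set.eq_of_mem_singleton hw]
    have h1 := (hx l).1
    have h2 := (hx l).2
    have habs := aux_coord x z l
    constructor
    · calc v l + g * t l - z l ≤ x l - z l := by linarith
        _ ≤ |x l - z l| := le_abs_self _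
        _ ≤ dist x z := habs
    · calc z l - (v l + g * (t l + 1)) ≤ z l - x l := by linarith
        _ ≤ |x l - z l| := by rw [abs_sub_comm]; exact le_abs_self _
        _ ≤ dist x z := habs
  have h1 : v l + g * t l - z l ≤ setDist (cellOf d v g t) {z} :=
    le_csInf hne fun y hy => (key y hy).1
  have h2 : z l - (v l + g * (t l + 1)) ≤ setDist (cellOf d v g t) {z} :=
    le_csInf hne fun y hy => (key y hy).2
  constructor <;> [linarith [le_trans h2 h]; linarith [le_trans h1 h]]

lemma aux_count {d : ℕ} (g : ℝ) (hg : 0 < g) (z : Pt d) (v : Fin d → ℝ) :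
    ((Set.ncard {t : Fin d → ℤ | setDist (cellOf d v g t) {z} ≤ g / d}) : ℝ≥0∞)
      ≤ ∑' t : Fin d → ℤ,
          (Set.pi Set.univ fun l => Icc (z l - g/d - g*(t l + 1)) (z l + g/d - g * t l)).indicator
            (1 : (Fin d → ℝ) → ℝ≥0∞) v := by
  set S := {t : Fin d → ℤ | setDist (cellOf d v g t) {z} ≤ g / d} with hS
  have hmem : ∀ t ∈ S,
      (Set.pi Set.univ fun l => Icc (z l - g/d - g*(t l + 1)) (z l + g/d - g * t l)).indicator
        (1 : (Fin d → ℝ) → ℝ≥0∞) v = 1 := by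
    intro t ht
    apply Set.indicator_of_mem
    rw [Set.mem_pi]
    exact fun l _ => aux_mem v g hg t z ht l
  refine le_trans ?_ (ENNReal.tsum_le_tsum (f := fun t => S.indicator (fun _ => (1:ℝ≥0∞)) t) ?_)
  · by_cases hSf : S.Finite
    · rw [Set.ncard_eq_toFinset_card S hSf]
      refine le_trans (le_of_eq ?_) (ENNReal.sum_le_tsum hSf.toFinset)
      rw [Finset.sum_congr rfl (fun t ht => Set.indicator_of_mem (hSf.mem_toFinset.mp ht) _)]
      simp
    · simp [Set.Infinite.ncard hSf]
  · intro t
    show S.indicator (fun _ => (1:ℝ≥0∞)) t ≤ _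
    by_cases ht : t ∈ S
    · rw [Set.indicator_of_mem ht, hmem t ht]
    · rw [Set.indicator_of_notMem ht]
      exact zero_le

lemma aux_prob (g : ℝ) (hg : 0 < g) :
    IsProbabilityMeasure ((ENNReal.ofReal g)⁻¹ • volume.restrict (Icc (0:ℝ) g)) := by
  constructor
  rw [Measure.smul_apply, smul_eq_mul, Measure.restrict_apply MeasurableSet.univ,
    Set.univ_inter, Real.volume_Icc]
  rw [show g - (0:ℝ) = g by ring, ENNReal.inv_mul_cancel (ENNReal.ofReal_pos.mpr hg).ne'
    ENNReal.ofReal_ne_top]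

/-- **Expected number of cells close to a fixed point** (proof of Lemma 3.2):
for a grid of side length `g` anchored at a uniformly random `v ∈ [0,g]^d`, the
expected number of cells `C` with `dist(C,z) ≤ g/d` is at most `(1+2/d)^d ≤ e²`. -/
theorem stmt12 (d : ℕ) (hd : 1 ≤ d) (g : ℝ) (hg : 0 < g) (z : Pt d) :
    (∫⁻ v : Fin d → ℝ,
        ((Set.ncard {t : Fin d → ℤ | setDist (cellOf d v g t) {z} ≤ g / d}) : ℝ≥0∞)
      ∂(MeasureTheory.Measure.pi fun _ : Fin d =>
          (ENNReal.ofReal g)⁻¹ • MeasureTheory.volume.restrict (Set.Icc (0:ℝ) g))) ≤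
      ENNReal.ofReal ((1 + 2 / (d:ℝ)) ^ d) ∧
    (1 + 2 / (d:ℝ)) ^ d ≤ Real.exp 2 := by
  have hd0 : (0:ℝ) < d := by exact_mod_cast hd
  constructor
  · set μ1 : Measure ℝ := (ENNReal.ofReal g)⁻¹ • volume.restrict (Icc (0:ℝ) g) with hμ1
    haveI : IsProbabilityMeasure μ1 := aux_prob g hg
    set J : Fin d → ℤ → Set ℝ :=
      fun l n => Icc (z l - g/d - g*(n + 1)) (z l + g/d - g * n) with hJ
    have hJm : ∀ l n, MeasurableSet (J l n) := fun l n => measurableSet_Icc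
    have hμJ : ∀ l, ∑' n : ℤ, μ1 (J l n) ≤ ENNReal.ofReal (1 + 2/(d:ℝ)) := by
      intro l
      have : ∀ n : ℤ, μ1 (J l n) =
          (ENNReal.ofReal g)⁻¹ * volume (J l n ∩ Icc (0:ℝ) g) := by
        intro n
        rw [hμ1, Measure.smul_apply, smul_eq_mul, Measure.restrict_apply (hJm l n)]
      simp only [this]
      rw [ENNReal.tsum_mul_left]
      calc (ENNReal.ofReal g)⁻¹ * ∑' n : ℤ, volume (J l n ∩ Icc (0:ℝ) g)
          ≤ (ENNReal.ofReal g)⁻¹ * ENNReal.ofReal (g + 2*(g/d)) := by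
            apply mul_le_mul_right
            exact aux_oneDim g hg (z l) (g/d) (by positivity)
        _ = ENNReal.ofReal (1 + 2/(d:ℝ)) := by
            rw [show g + 2*(g/d) = g * (1 + 2/(d:ℝ)) by ring,
              ENNReal.ofReal_mul hg.le, ← mul_assoc,
              ENNReal.inv_mul_cancel (ENNReal.ofReal_pos.mpr hg).ne' ENNReal.ofReal_ne_top,
              one_mul]
    calc ∫⁻ v : Fin d → ℝ,
          ((Set.ncard {t : Fin d → ℤ | setDist (cellOf d v g t) {z} ≤ g / d}) : ℝ≥0∞)
          ∂(Measure.pi fun _ : Fin d => μ1)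
        ≤ ∫⁻ v : Fin d → ℝ,
            (∑' t : Fin d → ℤ,
              (Set.pi Set.univ fun l => J l (t l)).indicator (1 : (Fin d → ℝ) → ℝ≥0∞) v)
          ∂(Measure.pi fun _ : Fin d => μ1) :=
          lintegral_mono fun v => aux_count g hg z v
      _ = ∑' t : Fin d → ℤ, ∫⁻ v : Fin d → ℝ,
            (Set.pi Set.univ fun l => J l (t l)).indicator (1 : (Fin d → ℝ) → ℝ≥0∞) v
          ∂(Measure.pi fun _ : Fin d => μ1) :=
          lintegral_tsum fun t =>
            (measurable_one.indicator (MeasurableSet.univ_pi fun l => hJm l (t l))).aemeasurable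
      _ = ∑' t : Fin d → ℤ, (Measure.pi fun _ : Fin d => μ1) (Set.pi Set.univ fun l => J l (t l)) := by
          congr 1; funext t
          exact lintegral_indicator_one (MeasurableSet.univ_pi fun l => hJm l (t l))
      _ = ∑' t : Fin d → ℤ, ∏ l, μ1 (J l (t l)) := by
          congr 1; funext t
          exact Measure.pi_pi _ _
      _ = ∏ l, ∑' n : ℤ, μ1 (J l n) := aux_tsum_pi_prod d fun l n => μ1 (J l n)
      _ ≤ ∏ _l : Fin d, ENNReal.ofReal (1 + 2/(d:ℝ)) :=
          Finset.prod_le_prod' fun l _ => hμJ l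
      _ = ENNReal.ofReal ((1 + 2/(d:ℝ)) ^ d) := by
          rw [Finset.prod_const, Finset.card_univ, Fintype.card_fin,
            ENNReal.ofReal_pow (by positivity)]
  · have h1 : 1 + 2/(d:ℝ) ≤ Real.exp (2/(d:ℝ)) := by
      have := Real.add_one_le_exp (2/(d:ℝ)); linarith
    calc (1 + 2/(d:ℝ)) ^ d ≤ (Real.exp (2/(d:ℝ))) ^ d :=
          pow_le_pow_left₀ (by positivity) h1 d
      _ = Real.exp (d * (2/(d:ℝ))) := by rw [Real.exp_nat_mul]
      _ = Real.exp 2 := by congr 1; field_simp
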